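/- Let m, n ≥ 2 be integers with n dividing m, and regard ℤ_n as a ℤ_m-module. For every prime p dividing n, the clique number of G_n(ℤ_m) satisfies ω(G_n(ℤ_m)) ≥ β_p · ∏_{q} (α_q + 1) − 1, where β_p is the multiplicity of p in n, and the product runs over all prime divisors q ≠ p of m with α_q the multiplicity of q in m. -/

import Mathlib

/-- The `M`-intersection graph of ideals of `R`: vertices are the nontrivial ideals of `R`,
and two distinct vertices `I`, `J` are adjacent iff `IM ∩ JM ≠ 0`. -/
def interGraph (R M : Type*) [CommRing R] [AddCommGroup M] [Module R M] :
    SimpleGraph {I : Ideal R // I ≠ ⊥ ∧ I ≠ ⊤} where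
  Adj I J := I ≠ J ∧ (I.1 • ⊤ ⊓ J.1 • ⊤ : Submodule R M) ≠ ⊥
  symm := ⟨fun I J h => ⟨h.1.symm, by rw [inf_comm]; exact h.2⟩⟩
  loopless := ⟨fun I h => h.1 rfl⟩

lemma nat_dvd_of_zmod_dvd {m d e : ℕ} [NeZero m] (hem : e ∣ m)
    (h : (e : ZMod m) ∣ (d : ZMod m)) : e ∣ d := by
  obtain ⟨c, hc⟩ := h
  have hc' : (d : ZMod m) = ((e * c.val : ℕ) : ZMod m) := by
    push_cast [ZMod.natCast_zmod_val]; exact hc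
  have hmod : d ≡ e * c.val [MOD m] := (ZMod.natCast_eq_natCast_iff _ _ _).mp hc'
  have hdvd : (m : ℤ) ∣ (e * c.val : ℕ) - (d : ℕ) := (Nat.modEq_iff_dvd).mp hmod
  have he : (e : ℤ) ∣ ((e * c.val : ℕ) : ℤ) - (d : ℕ) :=
    dvd_trans (Int.natCast_dvd_natCast.mpr hem) hdvd
  have : (e : ℤ) ∣ (d : ℕ) := by
    have h2 : (e : ℤ) ∣ ((e * c.val : ℕ) : ℤ) := by push_cast; exact Dvd.intro _ rfl
    have := dvd_sub h2 he
    simpa using this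
  exact_mod_cast this

lemma zmod_dvd_of_gcd_dvd {n d k : ℕ} (h : Nat.gcd d n ∣ k) :
    (d : ZMod n) ∣ (k : ZMod n) := by
  obtain ⟨c, hc⟩ := h
  have hb : ((Nat.gcd d n : ℕ) : ZMod n) = (d : ZMod n) * ((Nat.gcdA d n : ℤ) : ZMod n) := by
    have := Nat.gcd_eq_gcd_ab d n
    have : ((Nat.gcd d n : ℤ) : ZMod n) = ((d * Nat.gcdA d n + n * Nat.gcdB d n : ℤ) : ZMod n) := by
      rw [← this]
    push_cast at this ⊢
    simpa [ZMod.natCast_self] using this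
  refine ⟨((Nat.gcdA d n : ℤ) : ZMod n) * (c : ℕ), ?_⟩
  rw [hc]
  push_cast
  rw [hb]
  ring

lemma fact_le_of_dvd {a b : ℕ} (ha : a ≠ 0) (hb : b ≠ 0) (h : a ∣ b) (q : ℕ) :
    a.factorization q ≤ b.factorization q :=
  ((Nat.factorization_le_iff_dvd ha hb).mpr h) q


set_option maxHeartbeats 1000000 in
/-- For `m, n ≥ 2` with `n ∣ m`, regarding `ℤ_n` as a `ℤ_m`-module via the
natural cast, for every prime `p` dividing `n` the clique number of `G_n(ℤ_m)` is at least
`β_p · ∏_{q ≠ p, q ∣ m} (α_q + 1) − 1`, where `β_p` is the multiplicity of `p` in `n` and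
`α_q` that of `q` in `m`. -/
theorem cliqueNum_lower_bound (m n : ℕ) (hm : 2 ≤ m) (hn : 2 ≤ n) (hnm : n ∣ m)
    [Module (ZMod m) (ZMod n)]
    (hsmul : ∀ (a : ZMod m) (x : ZMod n), a • x = ZMod.castHom hnm (ZMod n) a * x)
    (p : ℕ) (hp : p.Prime) (hpn : p ∣ n) :
    n.factorization p * (∏ q ∈ m.primeFactors.erase p, (m.factorization q + 1)) - 1 ≤
      (interGraph (ZMod m) (ZMod n)).cliqueNum := by
  classical
  haveI : NeZero m := ⟨by omega⟩
  haveI : NeZero n := ⟨by omega⟩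
  haveI : Finite (Ideal (ZMod m)) :=
    Finite.of_injective (fun I => (I : Set (ZMod m))) SetLike.coe_injective
  haveI : Fintype {I : Ideal (ZMod m) // I ≠ ⊥ ∧ I ≠ ⊤} := Fintype.ofFinite _
  have hm0 : m ≠ 0 := by omega
  have hn0 : n ≠ 0 := by omega
  set β := n.factorization p with hβ
  set α := m.factorization p with hα
  have hβpos : 1 ≤ β := hp.factorization_pos_of_dvd hn0 hpn
  have hβα : β ≤ α := fact_le_of_dvd hn0 hm0 hnm p
  set m' := m / p ^ α with hm'def
  have hm'0 : m' ≠ 0 := (Nat.ordCompl_pos p hm0).ne'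
  have hpm' : ¬ p ∣ m' := Nat.not_dvd_ordCompl hp hm0
  set M := p ^ (β - 1) * m' with hMdef
  have hM0 : M ≠ 0 := mul_ne_zero (pow_ne_zero _ hp.pos.ne') hm'0
  have hMdvd : M ∣ m := by
    calc M ∣ p ^ α * m' := mul_dvd_mul (pow_dvd_pow p (by omega)) dvd_rfl
    _ = m := Nat.ordProj_mul_ordCompl_eq_self m p
  have hvM : M.factorization p = β - 1 := by
    rw [hMdef, Nat.factorization_mul (pow_ne_zero _ hp.pos.ne') hm'0]
    simp [hp.factorization_pow, Nat.factorization_eq_zero_of_not_dvd hpm']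
  -- cardinality of divisors of M
  have hcard : M.divisors.card = β * ∏ q ∈ m.primeFactors.erase p, (m.factorization q + 1) := by
    have hcop : (p ^ (β - 1)).Coprime m' :=
      Nat.Coprime.pow_left _ ((Nat.Prime.coprime_iff_not_dvd hp).mpr hpm')
    rw [hMdef, hcop.card_divisors_mul]
    congr 1
    · rw [Nat.divisors_prime_pow hp, Finset.card_map, Finset.card_range]; omega
    · have h1 : m'.factorization = m.factorization.erase p := Nat.factorization_ordCompl m p
      rw [Nat.card_divisors hm'0, ← Nat.support_factorization, h1, Finsupp.support_erase,
        Nat.support_factorization]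
      exact Finset.prod_congr rfl fun q hq => by
        rw [Finsupp.erase_ne (Finset.mem_erase.mp hq).1]
  set D := M.divisors.erase 1 with hDdef
  have hDcard : D.card = β * (∏ q ∈ m.primeFactors.erase p, (m.factorization q + 1)) - 1 := by
    rw [hDdef, Finset.card_erase_of_mem (Nat.one_mem_divisors.mpr hM0), hcard]
  -- properties of elements of D
  have hDprop : ∀ d ∈ D, d ∣ m ∧ d ≠ 1 ∧ d ≠ 0 ∧ d.factorization p ≤ β - 1 := by
    intro d hd
    obtain ⟨hd1, hdM⟩ := Finset.mem_erase.mp hd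
    obtain ⟨hdM', -⟩ := Nat.mem_divisors.mp hdM
    have hd0 : d ≠ 0 := by rintro rfl; exact hM0 (zero_dvd_iff.mp hdM')
    refine ⟨hdM'.trans hMdvd, hd1, hd0, ?_⟩
    have := fact_le_of_dvd hd0 hM0 hdM' p
    omega
  have hbot : ∀ d ∈ D, (Ideal.span {(d : ZMod m)} : Ideal (ZMod m)) ≠ ⊥ := by
    intro d hd
    obtain ⟨hdm, hd1, hd0, hdβ⟩ := hDprop d hd
    rw [Ne, Ideal.span_singleton_eq_bot, ZMod.natCast_eq_zero_iff]
    intro hmd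
    have hdm' : d = m := Nat.dvd_antisymm hdm hmd
    have : m.factorization p ≤ β - 1 := hdm' ▸ hdβ
    omega
  have htop : ∀ d ∈ D, (Ideal.span {(d : ZMod m)} : Ideal (ZMod m)) ≠ ⊤ := by
    intro d hd
    obtain ⟨hdm, hd1, hd0, -⟩ := hDprop d hd
    rw [Ne, Ideal.span_singleton_eq_top, ZMod.isUnit_iff_coprime]
    intro hco
    exact hd1 (by rwa [Nat.Coprime, Nat.gcd_eq_left hdm] at hco)
  -- injectivity
  have hinj : ∀ d ∈ D, ∀ e ∈ D, (Ideal.span {(d : ZMod m)} : Ideal (ZMod m)) =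
      Ideal.span {(e : ZMod m)} → d = e := by
    intro d hd e he hspan
    obtain ⟨hdm, -, -, -⟩ := hDprop d hd
    obtain ⟨hem, -, -, -⟩ := hDprop e he
    have h1 : (e : ZMod m) ∣ (d : ZMod m) :=
      Ideal.mem_span_singleton.mp (hspan ▸ Ideal.mem_span_singleton_self (d : ZMod m))
    have h2 : (d : ZMod m) ∣ (e : ZMod m) :=
      Ideal.mem_span_singleton.mp (hspan ▸ Ideal.mem_span_singleton_self (e : ZMod m))
    exact Nat.dvd_antisymm (nat_dvd_of_zmod_dvd hdm h2) (nat_dvd_of_zmod_dvd hem h1)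
  -- the witness element
  have hx0 : ((n / p : ℕ) : ZMod n) ≠ 0 := by
    rw [Ne, ZMod.natCast_eq_zero_iff]
    intro hdvd
    have h1 : 0 < n / p := Nat.div_pos (Nat.le_of_dvd (by omega) hpn) hp.pos
    have h2 : n / p < n := Nat.div_lt_self (by omega) hp.one_lt
    exact absurd (Nat.le_of_dvd h1 hdvd) (by omega)
  have hmem : ∀ d ∈ D, ((n / p : ℕ) : ZMod n) ∈
      (Ideal.span {(d : ZMod m)} • (⊤ : Submodule (ZMod m) (ZMod n))) := by
    intro d hd
    obtain ⟨hdm, -, hd0, hdβ⟩ := hDprop d hd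
    have hg0 : Nat.gcd d n ≠ 0 := Nat.gcd_ne_zero_right hn0
    have hgcd : Nat.gcd d n ∣ n / p := by
      rw [Nat.dvd_div_iff_mul_dvd hpn]
      rw [← Nat.factorization_le_iff_dvd (mul_ne_zero hp.pos.ne' hg0) hn0]
      intro q
      rw [Nat.factorization_mul hp.pos.ne' hg0]
      have hq2 : (Nat.gcd d n).factorization q ≤ n.factorization q :=
        fact_le_of_dvd hg0 hn0 (Nat.gcd_dvd_right d n) q
      by_cases hqp : q = p
      · subst hqp
        have hq1 : (Nat.gcd d n).factorization q ≤ d.factorization q :=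
          fact_le_of_dvd hg0 hd0 (Nat.gcd_dvd_left d n) q
        simp only [Finsupp.coe_add, Pi.add_apply, hp.factorization, Finsupp.single_eq_same]
        omega
      · simp only [Finsupp.coe_add, Pi.add_apply, hp.factorization,
          Finsupp.single_eq_of_ne' (Ne.symm hqp)]
        omega
    obtain ⟨y, hy⟩ := zmod_dvd_of_gcd_dvd hgcd
    have : ((n / p : ℕ) : ZMod n) = (d : ZMod m) • y := by
      rw [hsmul, map_natCast]; exact hy
    rw [this]
    exact Submodule.smul_mem_smul (Ideal.mem_span_singleton_self _) trivial
  -- build the clique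
  let g : {x // x ∈ D} → {I : Ideal (ZMod m) // I ≠ ⊥ ∧ I ≠ ⊤} :=
    fun d => ⟨Ideal.span {((d.1 : ℕ) : ZMod m)}, hbot d.1 d.2, htop d.1 d.2⟩
  have hg1 : ∀ d, (g d).1 = Ideal.span {((d.1 : ℕ) : ZMod m)} := fun _ => rfl
  let s : Finset {I : Ideal (ZMod m) // I ≠ ⊥ ∧ I ≠ ⊤} := D.attach.image g
  have hginj : Function.Injective g := by
    intro d e h
    have h1 : (g d).1 = (g e).1 := congrArg Subtype.val h
    rw [hg1, hg1] at h1
    exact Subtype.ext (hinj _ d.2 _ e.2 h1)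
  have hscard : s.card = D.card := by
    rw [Finset.card_image_of_injective _ hginj, Finset.card_attach]
  have hclique : (interGraph (ZMod m) (ZMod n)).IsClique s := by
    intro I hI J hJ hIJ
    simp only [s, Finset.coe_image, Set.mem_image, Finset.mem_coe, Finset.mem_attach,
      true_and] at hI hJ
    obtain ⟨d, -, rfl⟩ := hI
    obtain ⟨e, -, rfl⟩ := hJ
    refine ⟨hIJ, ?_⟩
    rw [hg1, hg1, Submodule.ne_bot_iff]
    exact ⟨((n / p : ℕ) : ZMod n),
      Submodule.mem_inf.mpr ⟨hmem d.1 d.2, hmem e.1 e.2⟩, hx0⟩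
  calc β * (∏ q ∈ m.primeFactors.erase p, (m.factorization q + 1)) - 1 = D.card := hDcard.symm
  _ = s.card := hscard.symm
  _ ≤ (interGraph (ZMod m) (ZMod n)).cliqueNum :=
      SimpleGraph.IsClique.card_le_cliqueNum (tc := hclique)
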